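/- Let Y, U be locally compact Polish spaces, μ a probability measure on Y. Suppose (νₙ) is a sequence of probability measures on Y × U of the form νₙ(dy,du) = λₙ(y)(du) μ(dy) for stochastic kernels λₙ, and suppose the family {νₙ} is tight. Suppose moreover ∫∫ f(y)(u) λₙ(y)(du) μ(dy) → ∫∫ f(y)(u) λ(y)(du) μ(dy) for all f ∈ L₁(μ, C₀(U)), where λ : Y → P_{≤1}(U) takes values in sub-probability measures. Then λ(y) is a probability measure for μ-almost every y. -/

import Mathlib

open MeasureTheory Filter Topology

theorem stmt_13 {Y : Type*} [TopologicalSpace Y] [PolishSpace Y] [LocallyCompactSpace Y]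
    [MeasurableSpace Y] [BorelSpace Y]
    {U : Type*} [TopologicalSpace U] [PolishSpace U] [LocallyCompactSpace U]
    [MeasurableSpace U] [BorelSpace U]
    (μ : Measure Y) [IsProbabilityMeasure μ]
    (lamSeq : ℕ → Y → Measure U)
    (hmeasn : ∀ n, Measurable (lamSeq n))
    (hprobn : ∀ n y, IsProbabilityMeasure (lamSeq n y))
    (ν : ℕ → Measure (Y × U))
    (hν : ∀ n, ν n = μ.bind fun y => (lamSeq n y).map (Prod.mk y))
    (htight : ∀ ε > (0 : ℝ), ∃ K : Set (Y × U), IsCompact K ∧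
      ∀ n, ν n Kᶜ ≤ ENNReal.ofReal ε)
    (lam : Y → Measure U)
    (hlam_meas : Measurable lam)
    (hlam_sub : ∀ y, lam y Set.univ ≤ 1)
    (hconv : ∀ f : Y → ZeroAtInftyContinuousMap U ℝ,
      AEStronglyMeasurable f μ → Integrable (fun y => ‖f y‖) μ →
      Tendsto (fun n => ∫ y, ∫ u, f y u ∂(lamSeq n y) ∂μ) atTop
        (𝓝 (∫ y, ∫ u, f y u ∂(lam y) ∂μ))) :
    ∀ᵐ y ∂μ, lam y Set.univ = 1 := by
  have hfin : ∀ y, IsFiniteMeasure (lam y) :=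
    fun y => ⟨lt_of_le_of_lt (hlam_sub y) ENNReal.one_lt_top⟩
  set F : Y → ℝ := fun y => (lam y Set.univ).toReal with hF
  have hFmeas : Measurable F :=
    ((Measure.measurable_coe MeasurableSet.univ).comp hlam_meas).ennreal_toReal
  have hFle1 : ∀ y, F y ≤ 1 := by
    intro y
    have := ENNReal.toReal_mono ENNReal.one_ne_top (hlam_sub y)
    simpa using this
  have hFnn : ∀ y, 0 ≤ F y := fun y => ENNReal.toReal_nonneg
  have hFint : Integrable F μ := by
    refine Integrable.mono' (integrable_const 1) hFmeas.aestronglyMeasurable ?_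
    filter_upwards with y
    rw [Real.norm_eq_abs, abs_of_nonneg (hFnn y)]
    exact hFle1 y
  -- key lower bound
  have key : ∀ ε : ℝ, 0 < ε → (1 : ℝ) - ε ≤ ∫ y, F y ∂μ := by
    intro ε hε
    rcases le_or_gt 1 ε with hε1 | hε1
    · have h0 : (0 : ℝ) ≤ ∫ y, F y ∂μ := integral_nonneg hFnn
      linarith
    obtain ⟨K, hK, hKν⟩ := htight ε hε
    set KU : Set U := Prod.snd '' K with hKU
    have hKUc : IsCompact KU := hK.image continuous_snd
    have hKUmeas : MeasurableSet KU := hKUc.isClosed.measurableSet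
    obtain ⟨g, hg1, -, hgsupp, hg01⟩ :=
      exists_continuous_one_zero_of_isCompact hKUc isClosed_empty (Set.disjoint_empty _)
    set G : ZeroAtInftyContinuousMap U ℝ := ⟨g, hgsupp.is_zero_at_infty⟩ with hG
    have hGc : Continuous fun u => G u := map_continuous G
    have hGsupp : HasCompactSupport fun u => G u := hgsupp
    have hG1 : ∀ u ∈ KU, G u = 1 := fun u hu => hg1 hu
    have hG01 : ∀ u, G u ∈ Set.Icc (0 : ℝ) 1 := fun u => hg01 u
    have hconvG := hconv (fun _ => G) aestronglyMeasurable_const (integrable_const _)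
    -- lower bound for each n
    have hlow : ∀ n, (1 : ℝ) - ε ≤ ∫ y, ∫ u, G u ∂(lamSeq n y) ∂μ := by
      intro n
      haveI : ProbabilityTheory.IsFiniteKernel
          (⟨lamSeq n, hmeasn n⟩ : ProbabilityTheory.Kernel Y U) :=
        ⟨⟨1, ENNReal.one_lt_top, fun y => le_of_eq (hprobn n y).measure_univ⟩⟩
      have hκmeas : Measurable fun y => (lamSeq n y).map (Prod.mk y) := by
        refine Measure.measurable_of_measurable_coe _ fun s hs => ?_
        have h1 : (fun y => ((lamSeq n y).map (Prod.mk y)) s)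
            = fun y => lamSeq n y {u | (y, u) ∈ s} := by
          funext y
          rw [Measure.map_apply measurable_prodMk_left hs]
          rfl
        rw [h1]
        exact ProbabilityTheory.Kernel.measurable_kernel_prodMk_left
          (κ := ⟨lamSeq n, hmeasn n⟩) hs
      have hbind : ∀ s : Set (Y × U), MeasurableSet s →
          ν n s = ∫⁻ y, lamSeq n y {u | (y, u) ∈ s} ∂μ := by
        intro s hs
        rw [hν n, Measure.bind_apply hs hκmeas.aemeasurable]
        congr 1
        funext y
        rw [Measure.map_apply measurable_prodMk_left hs]
        rfl
      have hνuniv : ν n Set.univ = 1 := by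
        rw [hbind _ MeasurableSet.univ]
        simp [measure_univ]
      have hslice : ν n (Set.univ ×ˢ KU) = ∫⁻ y, lamSeq n y KU ∂μ := by
        rw [hbind _ (MeasurableSet.univ.prod hKUmeas)]
        congr 1
        funext y
        congr 1
        ext u
        simp
      have hKsub : K ⊆ Set.univ ×ˢ KU := by
        rintro ⟨y, u⟩ hyu
        exact ⟨trivial, ⟨(y, u), hyu, rfl⟩⟩
      have hcompl : ν n (Set.univ ×ˢ KU)ᶜ ≤ ENNReal.ofReal ε :=
        le_trans (measure_mono (Set.compl_subset_compl.2 hKsub)) (hKν n)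
      have hge : 1 - ENNReal.ofReal ε ≤ ν n (Set.univ ×ˢ KU) := by
        have h1 : ν n Set.univ ≤ ν n (Set.univ ×ˢ KU) + ν n (Set.univ ×ˢ KU)ᶜ := by
          rw [← Set.union_compl_self (Set.univ ×ˢ KU)] at *
          exact measure_union_le _ _
        rw [hνuniv] at h1
        exact tsub_le_iff_right.2 (h1.trans (add_le_add le_rfl hcompl))
      -- pass to real integral
      have hμmeasKU : Measurable fun y => lamSeq n y KU :=
        (Measure.measurable_coe hKUmeas).comp (hmeasn n)
      have hlt : ∀ y, lamSeq n y KU < ⊤ := fun y =>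
        lt_of_le_of_lt (measure_mono (Set.subset_univ _))
          (by rw [(hprobn n y).measure_univ]; exact ENNReal.one_lt_top)
      have hint_toReal : ∫ y, (lamSeq n y KU).toReal ∂μ
          = (∫⁻ y, lamSeq n y KU ∂μ).toReal :=
        integral_toReal hμmeasKU.aemeasurable (ae_of_all _ hlt)
      have hstep1 : (1 : ℝ) - ε ≤ ∫ y, (lamSeq n y KU).toReal ∂μ := by
        rw [hint_toReal]
        have h2 : 1 - ENNReal.ofReal ε ≤ ∫⁻ y, lamSeq n y KU ∂μ := hslice ▸ hge
        have hfin2 : (∫⁻ y, lamSeq n y KU ∂μ) ≠ ⊤ := by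
          refine ne_of_lt (lt_of_le_of_lt ?_ ENNReal.one_lt_top)
          calc ∫⁻ y, lamSeq n y KU ∂μ ≤ ∫⁻ _, 1 ∂μ := by
                refine lintegral_mono fun y => ?_
                rw [← (hprobn n y).measure_univ]
                exact measure_mono (Set.subset_univ _)
            _ = 1 := by simp [measure_univ]
        have h3 := ENNReal.toReal_mono hfin2 h2
        refine le_trans ?_ h3
        rw [ENNReal.toReal_sub_of_le (by exact_mod_cast ENNReal.ofReal_le_one.2 hε1.le)
          ENNReal.one_ne_top]
        simp [ENNReal.toReal_ofReal hε.le]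
      -- pointwise: (lamSeq n y KU).toReal ≤ ∫ u, G u ∂ lamSeq n y
      have hpt : ∀ y, (lamSeq n y KU).toReal ≤ ∫ u, G u ∂(lamSeq n y) := by
        intro y
        have := hprobn n y
        have hGint : Integrable (fun u => G u) (lamSeq n y) :=
          hGc.integrable_of_hasCompactSupport hGsupp
        have hind : Integrable (KU.indicator fun _ => (1 : ℝ)) (lamSeq n y) :=
          (integrable_const 1).indicator hKUmeas
        have hmono : ∀ u, KU.indicator (fun _ => (1 : ℝ)) u ≤ G u := by
          intro u
          by_cases hu : u ∈ KU
          · rw [Set.indicator_of_mem hu]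
            exact le_of_eq (hG1 u hu).symm
          · rw [Set.indicator_of_notMem hu]
            exact (hG01 u).1
        calc (lamSeq n y KU).toReal
            = ∫ u, KU.indicator (fun _ => (1 : ℝ)) u ∂(lamSeq n y) := by
              rw [integral_indicator_const (1 : ℝ) hKUmeas]; simp [Measure.real]
          _ ≤ ∫ u, G u ∂(lamSeq n y) := integral_mono hind hGint hmono
      -- integrability of y ↦ ∫ u, G u ∂ lamSeq n y
      have hsm : StronglyMeasurable fun y => ∫ u, G u ∂(lamSeq n y) :=
        MeasureTheory.StronglyMeasurable.integral_kernel_prod_right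
          (κ := ⟨lamSeq n, hmeasn n⟩)
          ((hGc.comp continuous_snd).stronglyMeasurable : StronglyMeasurable
            (Function.uncurry fun _ u => G u))
      have hintG : Integrable (fun y => ∫ u, G u ∂(lamSeq n y)) μ := by
        refine Integrable.mono' (integrable_const 1) hsm.aestronglyMeasurable ?_
        filter_upwards with y
        rw [Real.norm_eq_abs, abs_of_nonneg (integral_nonneg fun u => (hG01 u).1)]
        have := hprobn n y
        calc ∫ u, G u ∂(lamSeq n y) ≤ ∫ _, (1 : ℝ) ∂(lamSeq n y) :=
              integral_mono (hGc.integrable_of_hasCompactSupport hGsupp)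
                (integrable_const 1) fun u => (hG01 u).2
          _ = 1 := by simp
      calc (1 : ℝ) - ε ≤ ∫ y, (lamSeq n y KU).toReal ∂μ := hstep1
        _ ≤ ∫ y, ∫ u, G u ∂(lamSeq n y) ∂μ :=
            integral_mono (Integrable.mono' (integrable_const (1 : ℝ))
              hμmeasKU.ennreal_toReal.aestronglyMeasurable (by
                filter_upwards with y
                rw [Real.norm_eq_abs, abs_of_nonneg ENNReal.toReal_nonneg]
                exact ENNReal.toReal_le_of_le_ofReal zero_le_one
                  (by rw [ENNReal.ofReal_one, ← (hprobn n y).measure_univ]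
                      exact measure_mono (Set.subset_univ _)))) hintG hpt
    -- pass to the limit
    have hlim : (1 : ℝ) - ε ≤ ∫ y, ∫ u, G u ∂(lam y) ∂μ :=
      le_of_tendsto_of_tendsto' tendsto_const_nhds hconvG hlow
    -- the limit is at most ∫ F
    refine hlim.trans (integral_mono_of_nonneg ?_ hFint ?_)
    · filter_upwards with y
      exact integral_nonneg fun u => (hG01 u).1
    · filter_upwards with y
      have := hfin y
      calc ∫ u, G u ∂(lam y) ≤ ∫ _, (1 : ℝ) ∂(lam y) :=
            integral_mono (hGc.integrable_of_hasCompactSupport hGsupp)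
              (integrable_const 1) fun u => (hG01 u).2
        _ = F y := by simp [hF, Measure.real]
  -- conclude ∫ F = 1
  have hle : ∫ y, F y ∂μ ≤ 1 := by
    calc ∫ y, F y ∂μ ≤ ∫ _, (1 : ℝ) ∂μ := integral_mono hFint (integrable_const 1) hFle1
      _ = 1 := by simp
  have hge : (1 : ℝ) ≤ ∫ y, F y ∂μ := by
    by_contra h
    push_neg at h
    have := key ((1 - ∫ y, F y ∂μ) / 2) (by linarith)
    linarith
  have hintF : ∫ y, F y ∂μ = 1 := le_antisymm hle hge
  have hzero : ∫ y, (1 - F y) ∂μ = 0 := by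
    rw [integral_sub (integrable_const 1) hFint]
    simp [hintF]
  have hae : ∀ᵐ y ∂μ, (1 : ℝ) - F y = 0 := by
    have h := (integral_eq_zero_iff_of_nonneg (f := fun y => 1 - F y)
      (fun y => by simpa using hFle1 y) ((integrable_const 1).sub hFint)).1 hzero
    filter_upwards [h] with y hy
    simpa using hy
  filter_upwards [hae] with y hy
  have : F y = 1 := by linarith
  exact (ENNReal.toReal_eq_one_iff _).1 this
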